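/- For every integer k ≥ 1, the algebra T_{3,2,k} = C[x,y,z]/(x^2, y^2, z^2)^k has the Weak Lefschetz Property. -/

import Mathlib

open MvPolynomial

/-- The degree-`i` homogeneous component of the quotient `ℂ[x_1,…,x_n]/J`,
realized as the image of the space of homogeneous polynomials of degree `i`. -/
noncomputable def quotComp {n : ℕ} (J : Ideal (MvPolynomial (Fin n) ℂ)) (i : ℕ) :
    Submodule ℂ (MvPolynomial (Fin n) ℂ ⧸ J) :=
  Submodule.map (Ideal.Quotient.mkₐ ℂ J).toLinearMap (homogeneousSubmodule (Fin n) ℂ i)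

/-- The graded algebra `ℂ[x_1,…,x_n]/J` has the Weak Lefschetz Property: there is a
linear form `L` such that for every `i`, multiplication by `L` from the degree-`i`
component to the degree-`(i+1)` component is injective or surjective. -/
def hasWLP {n : ℕ} (J : Ideal (MvPolynomial (Fin n) ℂ)) : Prop :=
  ∃ L : MvPolynomial (Fin n) ℂ, L.IsHomogeneous 1 ∧ ∀ i : ℕ,
    (∀ x ∈ quotComp J i, Ideal.Quotient.mk J L * x = 0 → x = 0) ∨
    (∀ y ∈ quotComp J (i + 1), ∃ x ∈ quotComp J i, Ideal.Quotient.mk J L * x = y)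

/-- The ideal `(x_1^d, …, x_n^d)^k` in `ℂ[x_1,…,x_n]`. -/
noncomputable def Tideal (n d k : ℕ) : Ideal (MvPolynomial (Fin n) ℂ) :=
  (Ideal.span (Set.range fun i : Fin n => (X i : MvPolynomial (Fin n) ℂ) ^ d)) ^ k

open Finsupp

namespace WLP8

noncomputable abbrev R3 : Type := MvPolynomial (Fin 3) ℂ

noncomputable def σ2 : R3 →ₐ[ℂ] R3 := expand 2

/-- explicit exponent vectors -/
noncomputable def ee (a b c : ℕ) : Fin 3 →₀ ℕ :=
  Finsupp.single 0 a + Finsupp.single 1 b + Finsupp.single 2 c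

@[simp] lemma ee_0 (a b c : ℕ) : ee a b c 0 = a := by
  simp [ee, Finsupp.single_apply]
@[simp] lemma ee_1 (a b c : ℕ) : ee a b c 1 = b := by
  simp [ee, Finsupp.single_apply]
@[simp] lemma ee_2 (a b c : ℕ) : ee a b c 2 = c := by
  simp [ee, Finsupp.single_apply]

lemma fin3_cases (i : Fin 3) : i = 0 ∨ i = 1 ∨ i = 2 := by omega

lemma ee_eq (t : Fin 3 →₀ ℕ) : ee (t 0) (t 1) (t 2) = t := by
  ext i
  rcases fin3_cases i with rfl | rfl | rfl <;> simp

lemma deg3 (t : Fin 3 →₀ ℕ) : t.degree = t 0 + t 1 + t 2 := by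
  have h : t.degree = ∑ i : Fin 3, t i := by
    rw [Finsupp.degree]
    refine Finset.sum_subset (Finset.subset_univ _) (fun i _ hi => ?_)
    simpa using Finsupp.notMem_support_iff.mp hi
  rw [h, Fin.sum_univ_three]

lemma weight3 (t : Fin 3 →₀ ℕ) : (Finsupp.weight (1 : Fin 3 → ℕ)) t = t 0 + t 1 + t 2 := by
  have := deg3 t
  rw [Finsupp.degree_eq_weight_one] at this
  exact this

/-- the monomial "floor-sum" ideal -/
noncomputable def KI (k : ℕ) : Ideal R3 where
  carrier := {F | ∀ t ∈ F.support, k ≤ t 0 / 2 + t 1 / 2 + t 2 / 2}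
  add_mem' := by
    classical
    intro p q hp hq t ht
    rcases Finset.mem_union.mp (MvPolynomial.support_add ht) with h | h
    · exact hp t h
    · exact hq t h
  zero_mem' := by simp
  smul_mem' := by
    classical
    intro c F hF t ht
    rw [smul_eq_mul] at ht
    have := MvPolynomial.support_mul c F ht
    rcases Finset.mem_add.mp this with ⟨t1, ht1, t2, ht2, rfl⟩
    have := hF t2 ht2
    simp only [Finsupp.add_apply]
    omega

lemma mem_KI {k : ℕ} {F : R3} :
    F ∈ KI k ↔ ∀ t ∈ F.support, k ≤ t 0 / 2 + t 1 / 2 + t 2 / 2 := Iff.rfl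

lemma KI_mul_le (a b : ℕ) : KI a * KI b ≤ KI (a + b) := by
  classical
  rw [Ideal.mul_le]
  intro p hp q hq t ht
  have := MvPolynomial.support_mul p q ht
  rcases Finset.mem_add.mp this with ⟨t1, ht1, t2, ht2, rfl⟩
  have h1 := hp t1 ht1
  have h2 := hq t2 ht2
  simp only [Finsupp.add_apply]
  omega

lemma Tideal_le_KI (k : ℕ) :
    (Ideal.span (Set.range fun i : Fin 3 => (X i : R3) ^ 2)) ^ k ≤ KI k := by
  classical
  induction k with
  | zero =>
    intro F _ t _
    simp
  | succ n ih =>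
    rw [pow_succ]
    refine le_trans (Ideal.mul_mono ih ?_) (KI_mul_le n 1)
    rw [Ideal.span_le]
    rintro F ⟨i, rfl⟩
    intro t ht
    simp only [X_pow_eq_monomial, MvPolynomial.support_monomial, if_neg (one_ne_zero' ℂ)] at ht
    simp only [Finset.mem_singleton] at ht
    subst ht
    rcases fin3_cases i with rfl | rfl | rfl <;> simp [Finsupp.single_apply]

-- monomial membership, easy direction
lemma mono_mem {k : ℕ} {t : Fin 3 →₀ ℕ} (h : k ≤ t 0 / 2 + t 1 / 2 + t 2 / 2) (c : ℂ) :
    monomial t c ∈ (Ideal.span (Set.range fun i : Fin 3 => (X i : R3) ^ 2)) ^ k := by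
  set I := Ideal.span (Set.range fun i : Fin 3 => (X i : R3) ^ 2) with hI
  obtain ⟨b0, b1, b2, hsum, h0, h1, h2⟩ :
      ∃ b0 b1 b2 : ℕ, b0 + b1 + b2 = k ∧ 2*b0 ≤ t 0 ∧ 2*b1 ≤ t 1 ∧ 2*b2 ≤ t 2 :=
    ⟨min (t 0 / 2) k, min (t 1 / 2) (k - min (t 0 / 2) k),
      k - min (t 0 / 2) k - min (t 1 / 2) (k - min (t 0 / 2) k), by omega, by omega, by omega,
      by omega⟩
  have key : (monomial t c : R3)
      = monomial (ee (t 0 - 2*b0) (t 1 - 2*b1) (t 2 - 2*b2)) c *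
        (((X 0 : R3) ^ 2) ^ b0 * ((X 1 : R3) ^ 2) ^ b1 * ((X 2 : R3) ^ 2) ^ b2) := by
    rw [← pow_mul, ← pow_mul, ← pow_mul, X_pow_eq_monomial, X_pow_eq_monomial,
      X_pow_eq_monomial, monomial_mul, monomial_mul, monomial_mul]
    rw [mul_one, mul_one, mul_one]
    have hexp : ee (t 0 - 2*b0) (t 1 - 2*b1) (t 2 - 2*b2) + (Finsupp.single 0 (2*b0)
        + Finsupp.single 1 (2*b1) + Finsupp.single 2 (2*b2)) = t := by
      ext i; rcases fin3_cases i with rfl | rfl | rfl <;>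
        simp [Finsupp.add_apply, Finsupp.single_apply] <;> omega
    rw [hexp]
  rw [key]
  apply Ideal.mul_mem_left
  have m0 : ((X 0 : R3) ^ 2) ^ b0 ∈ I ^ b0 :=
    Ideal.pow_mem_pow (Ideal.subset_span (Set.mem_range_self 0)) b0
  have m1 : ((X 1 : R3) ^ 2) ^ b1 ∈ I ^ b1 :=
    Ideal.pow_mem_pow (Ideal.subset_span (Set.mem_range_self 1)) b1
  have m2 : ((X 2 : R3) ^ 2) ^ b2 ∈ I ^ b2 :=
    Ideal.pow_mem_pow (Ideal.subset_span (Set.mem_range_self 2)) b2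
  have : ((X 0 : R3) ^ 2) ^ b0 * ((X 1 : R3) ^ 2) ^ b1 * ((X 2 : R3) ^ 2) ^ b2
      ∈ I ^ b0 * I ^ b1 * I ^ b2 :=
    Ideal.mul_mem_mul (Ideal.mul_mem_mul m0 m1) m2
  rwa [← pow_add, ← pow_add, hsum] at this

-- σ2 on monomials
lemma σ2_monomial (d : Fin 3 →₀ ℕ) (c : ℂ) : σ2 (monomial d c) = monomial (2 • d) c := by
  rw [σ2, expand_monomial]

lemma mul_σ2_sum (τ : Fin 3 →₀ ℕ) (E : R3) :
    monomial τ 1 * σ2 E = ∑ s ∈ E.support, monomial (τ + 2 • s) (coeff s E) := by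
  conv_lhs => rw [← E.support_sum_monomial_coeff]
  rw [map_sum, Finset.mul_sum]
  refine Finset.sum_congr rfl (fun s _ => ?_)
  rw [σ2_monomial, monomial_mul, one_mul]

lemma coeff_tau (τ : Fin 3 →₀ ℕ) (E : R3) (s : Fin 3 →₀ ℕ) :
    coeff (τ + 2 • s) (monomial τ 1 * σ2 E) = coeff s E := by
  classical
  rw [mul_σ2_sum]
  rw [MvPolynomial.coeff_sum]
  have : ∀ s' ∈ E.support, coeff (τ + 2 • s) (monomial (τ + 2 • s') (coeff s' E))
      = if s' = s then coeff s' E else 0 := by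
    intro s' _
    rw [MvPolynomial.coeff_monomial]
    congr 1
    simp only [eq_iff_iff]
    constructor
    · intro h
      ext i
      have := DFunLike.congr_fun h i
      simp only [Finsupp.add_apply, Finsupp.smul_apply, smul_eq_mul] at this
      omega
    · rintro rfl; rfl
  rw [Finset.sum_congr rfl this, Finset.sum_ite_eq' E.support s (fun s' => coeff s' E)]
  split
  · rfl
  · exact (MvPolynomial.notMem_support_iff.mp (by assumption)).symm

lemma coeff_tau_ne {τ τ' : Fin 3 →₀ ℕ} (hτ : ∀ i, τ i ≤ 1) (hτ' : ∀ i, τ' i ≤ 1)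
    (hne : τ ≠ τ') (E : R3) (s : Fin 3 →₀ ℕ) :
    coeff (τ + 2 • s) (monomial τ' 1 * σ2 E) = 0 := by
  classical
  rw [mul_σ2_sum, MvPolynomial.coeff_sum]
  refine Finset.sum_eq_zero (fun s' _ => ?_)
  rw [MvPolynomial.coeff_monomial, if_neg]
  intro h
  apply hne
  obtain ⟨i, hi⟩ := Finsupp.ne_iff.mp (fun hc : τ = τ' => hne hc)
  have := DFunLike.congr_fun h i
  simp only [Finsupp.add_apply, Finsupp.smul_apply, smul_eq_mul] at this
  have := hτ i; have := hτ' i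
  omega


lemma vanish4 {k : ℕ} {τ1 τ2 τ3 τ4 : Fin 3 →₀ ℕ}
    (h1 : ∀ i, τ1 i ≤ 1) (h2 : ∀ i, τ2 i ≤ 1) (h3 : ∀ i, τ3 i ≤ 1) (h4 : ∀ i, τ4 i ≤ 1)
    (h12 : τ1 ≠ τ2) (h13 : τ1 ≠ τ3) (h14 : τ1 ≠ τ4)
    {E1 E2 E3 E4 : R3} {d1 : ℕ} (hE1 : E1.IsHomogeneous d1) (hd1 : d1 < k)
    (hmem : monomial τ1 1 * σ2 E1 + monomial τ2 1 * σ2 E2 + monomial τ3 1 * σ2 E3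
      + monomial τ4 1 * σ2 E4 ∈ KI k) : E1 = 0 := by
  ext s
  rw [MvPolynomial.coeff_zero]
  by_contra hc
  have hco : coeff (τ1 + 2 • s) (monomial τ1 1 * σ2 E1 + monomial τ2 1 * σ2 E2
      + monomial τ3 1 * σ2 E3 + monomial τ4 1 * σ2 E4) = coeff s E1 := by
    rw [MvPolynomial.coeff_add, MvPolynomial.coeff_add, MvPolynomial.coeff_add,
      coeff_tau, coeff_tau_ne h1 h2 h12, coeff_tau_ne h1 h3 h13, coeff_tau_ne h1 h4 h14]
    ring
  have ht : (τ1 + 2 • s) ∈ (monomial τ1 1 * σ2 E1 + monomial τ2 1 * σ2 E2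
      + monomial τ3 1 * σ2 E3 + monomial τ4 1 * σ2 E4).support :=
    MvPolynomial.mem_support_iff.mpr (by rw [hco]; exact hc)
  have hk := hmem _ ht
  have hdeg : s 0 + s 1 + s 2 = d1 := by
    have := hE1 hc
    rwa [weight3] at this
  have e0 := h1 0; have e1 := h1 1; have e2 := h1 2
  simp only [Finsupp.add_apply, Finsupp.smul_apply, smul_eq_mul] at hk
  omega

/-- parity-class predicate -/
def cls (τ : Fin 3 →₀ ℕ) : (Fin 3 →₀ ℕ) → Prop := fun s => ∀ i, s i % 2 = τ i

instance (τ : Fin 3 →₀ ℕ) : DecidablePred (cls τ) := fun s =>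
  decidable_of_iff (∀ i, s i % 2 = τ i) Iff.rfl

noncomputable def extc (τ : Fin 3 →₀ ℕ) (F : R3) : R3 :=
  ∑ s ∈ F.support.filter (cls τ),
    monomial (Finsupp.mapRange (· / 2) (by norm_num) (s - τ)) (coeff s F)

lemma monomial_extc {τ : Fin 3 →₀ ℕ} (hτ : ∀ i, τ i ≤ 1) (F : R3) :
    monomial τ 1 * σ2 (extc τ F)
      = ∑ s ∈ F.support.filter (cls τ), monomial s (coeff s F) := by
  rw [extc, map_sum, Finset.mul_sum]
  refine Finset.sum_congr rfl (fun s hs => ?_)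
  rw [σ2_monomial, monomial_mul, one_mul]
  have hcls := (Finset.mem_filter.mp hs).2
  have hexp : τ + 2 • Finsupp.mapRange (· / 2) (by norm_num) (s - τ) = s := by
    ext i
    have := hcls i
    have := hτ i
    simp only [Finsupp.add_apply, Finsupp.smul_apply, Finsupp.mapRange_apply,
      Finsupp.tsub_apply, smul_eq_mul]
    omega
  rw [hexp]

lemma extc_homog {τ : Fin 3 →₀ ℕ} {F : R3} {n d : ℕ} (hF : F.IsHomogeneous n)
    (hd : ∀ s : Fin 3 →₀ ℕ, (∀ i, s i % 2 = τ i) → s 0 + s 1 + s 2 = n →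
      (s 0 - τ 0) / 2 + (s 1 - τ 1) / 2 + (s 2 - τ 2) / 2 = d) :
    (extc τ F).IsHomogeneous d := by
  apply IsHomogeneous.sum
  intro s hs
  rcases Finset.mem_filter.mp hs with ⟨hs1, hs2⟩
  apply isHomogeneous_monomial
  rw [deg3]
  simp only [Finsupp.mapRange_apply, Finsupp.tsub_apply]
  refine hd s hs2 ?_
  have := hF (MvPolynomial.mem_support_iff.mp hs1)
  rwa [weight3] at this

lemma extc_guard {τ : Fin 3 →₀ ℕ} {F : R3} {n : ℕ} (hF : F.IsHomogeneous n)
    (himp : ∀ s : Fin 3 →₀ ℕ, (∀ i, s i % 2 = τ i) → s 0 + s 1 + s 2 ≠ n) :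
    extc τ F = 0 := by
  refine Finset.sum_eq_zero (fun s hs => ?_)
  rcases Finset.mem_filter.mp hs with ⟨hs1, hs2⟩
  have := hF (MvPolynomial.mem_support_iff.mp hs1)
  rw [weight3] at this
  exact absurd this (himp s hs2)

lemma sum_part4 {M : Type*} [AddCommMonoid M] (s : Finset (Fin 3 →₀ ℕ))
    (g : (Fin 3 →₀ ℕ) → M) (Q1 Q2 Q3 Q4 : (Fin 3 →₀ ℕ) → Prop)
    [DecidablePred Q1] [DecidablePred Q2] [DecidablePred Q3] [DecidablePred Q4]
    (hcov : ∀ x ∈ s, Q1 x ∨ Q2 x ∨ Q3 x ∨ Q4 x)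
    (h12 : ∀ x, Q1 x → Q2 x → False) (h13 : ∀ x, Q1 x → Q3 x → False)
    (h14 : ∀ x, Q1 x → Q4 x → False) (h23 : ∀ x, Q2 x → Q3 x → False)
    (h24 : ∀ x, Q2 x → Q4 x → False) (h34 : ∀ x, Q3 x → Q4 x → False) :
    ∑ x ∈ s, g x = ∑ x ∈ s.filter Q1, g x + ∑ x ∈ s.filter Q2, g x
      + ∑ x ∈ s.filter Q3, g x + ∑ x ∈ s.filter Q4, g x := by
  have hu : s = s.filter Q1 ∪ (s.filter Q2 ∪ (s.filter Q3 ∪ s.filter Q4)) := by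
    ext x
    simp only [Finset.mem_union, Finset.mem_filter]
    constructor
    · intro hx
      rcases hcov x hx with h | h | h | h <;> tauto
    · tauto
  have d34 : Disjoint (s.filter Q3) (s.filter Q4) := by
    rw [Finset.disjoint_left]
    intro x hx hx'
    exact h34 x (Finset.mem_filter.mp hx).2 (Finset.mem_filter.mp hx').2
  have d234 : Disjoint (s.filter Q2) (s.filter Q3 ∪ s.filter Q4) := by
    rw [Finset.disjoint_left]
    intro x hx hx'
    rcases Finset.mem_union.mp hx' with h | h
    · exact h23 x (Finset.mem_filter.mp hx).2 (Finset.mem_filter.mp h).2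
    · exact h24 x (Finset.mem_filter.mp hx).2 (Finset.mem_filter.mp h).2
  have d1234 : Disjoint (s.filter Q1) (s.filter Q2 ∪ (s.filter Q3 ∪ s.filter Q4)) := by
    rw [Finset.disjoint_left]
    intro x hx hx'
    rcases Finset.mem_union.mp hx' with h | h
    · exact h12 x (Finset.mem_filter.mp hx).2 (Finset.mem_filter.mp h).2
    rcases Finset.mem_union.mp h with h | h
    · exact h13 x (Finset.mem_filter.mp hx).2 (Finset.mem_filter.mp h).2
    · exact h14 x (Finset.mem_filter.mp hx).2 (Finset.mem_filter.mp h).2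
  conv_lhs => rw [hu]
  rw [Finset.sum_union d1234, Finset.sum_union d234, Finset.sum_union d34,
    add_assoc, add_assoc]

lemma cls_of (τ x : Fin 3 →₀ ℕ) (h0 : x 0 % 2 = τ 0) (h1 : x 1 % 2 = τ 1)
    (h2 : x 2 % 2 = τ 2) : cls τ x := fun i => by
  rcases fin3_cases i with rfl | rfl | rfl <;> assumption

lemma X_as_monomial (i : Fin 3) : (X i : R3) = monomial (Finsupp.single i 1) 1 :=
  (pow_one (X i : R3)).symm.trans (X_pow_eq_monomial)

lemma M000 : (monomial (ee 0 0 0) 1 : R3) = 1 := by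
  have h : ee 0 0 0 = (0 : Fin 3 →₀ ℕ) := by
    ext i; rcases fin3_cases i with rfl | rfl | rfl <;> simp
  rw [h, monomial_zero', C_1]

lemma M100 : (monomial (ee 1 0 0) 1 : R3) = X 0 := by
  have h : ee 1 0 0 = Finsupp.single (0 : Fin 3) 1 := by
    ext i; rcases fin3_cases i with rfl | rfl | rfl <;> simp [Finsupp.single_apply]
  rw [h, ← X_as_monomial]

lemma M010 : (monomial (ee 0 1 0) 1 : R3) = X 1 := by
  have h : ee 0 1 0 = Finsupp.single (1 : Fin 3) 1 := by
    ext i; rcases fin3_cases i with rfl | rfl | rfl <;> simp [Finsupp.single_apply]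
  rw [h, ← X_as_monomial]

lemma M001 : (monomial (ee 0 0 1) 1 : R3) = X 2 := by
  have h : ee 0 0 1 = Finsupp.single (2 : Fin 3) 1 := by
    ext i; rcases fin3_cases i with rfl | rfl | rfl <;> simp [Finsupp.single_apply]
  rw [h, ← X_as_monomial]

lemma M110 : (monomial (ee 1 1 0) 1 : R3) = X 0 * X 1 := by
  rw [X_as_monomial, X_as_monomial, monomial_mul, mul_one]
  have h : ee 1 1 0 = Finsupp.single (0 : Fin 3) 1 + Finsupp.single (1 : Fin 3) 1 := by
    ext i; rcases fin3_cases i with rfl | rfl | rfl <;> simp [Finsupp.single_apply]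
  rw [h]

lemma M101 : (monomial (ee 1 0 1) 1 : R3) = X 0 * X 2 := by
  rw [X_as_monomial, X_as_monomial, monomial_mul, mul_one]
  have h : ee 1 0 1 = Finsupp.single (0 : Fin 3) 1 + Finsupp.single (2 : Fin 3) 1 := by
    ext i; rcases fin3_cases i with rfl | rfl | rfl <;> simp [Finsupp.single_apply]
  rw [h]

lemma M011 : (monomial (ee 0 1 1) 1 : R3) = X 1 * X 2 := by
  rw [X_as_monomial, X_as_monomial, monomial_mul, mul_one]
  have h : ee 0 1 1 = Finsupp.single (1 : Fin 3) 1 + Finsupp.single (2 : Fin 3) 1 := by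
    ext i; rcases fin3_cases i with rfl | rfl | rfl <;> simp [Finsupp.single_apply]
  rw [h]

lemma M111 : (monomial (ee 1 1 1) 1 : R3) = X 0 * X 1 * X 2 := by
  rw [X_as_monomial, X_as_monomial, X_as_monomial, monomial_mul, monomial_mul,
    mul_one, mul_one]
  have h : ee 1 1 1 = Finsupp.single (0 : Fin 3) 1 + Finsupp.single (1 : Fin 3) 1
      + Finsupp.single (2 : Fin 3) 1 := by
    ext i; rcases fin3_cases i with rfl | rfl | rfl <;> simp [Finsupp.single_apply]
  rw [h]

lemma cls_disj {τ τ' : Fin 3 →₀ ℕ}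
    (h : ¬ (τ 0 = τ' 0 ∧ τ 1 = τ' 1)) :
    ∀ x, cls τ x → cls τ' x → False := by
  intro x hA hB
  have a0 := hA 0; have a1 := hA 1; have b0 := hB 0; have b1 := hB 1
  omega

lemma decompEven {m : ℕ} {F : R3} (hF : F.IsHomogeneous (2 * m)) :
    ∃ f a b c : R3, f.IsHomogeneous m ∧ a.IsHomogeneous (m - 1) ∧
      b.IsHomogeneous (m - 1) ∧ c.IsHomogeneous (m - 1) ∧
      (m = 0 → a = 0 ∧ b = 0 ∧ c = 0) ∧
      F = σ2 f + X 0 * X 1 * σ2 a + X 0 * X 2 * σ2 b + X 1 * X 2 * σ2 c := by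
  classical
  refine ⟨extc (ee 0 0 0) F, extc (ee 1 1 0) F, extc (ee 1 0 1) F, extc (ee 0 1 1) F,
    ?_, ?_, ?_, ?_, ?_, ?_⟩
  · refine extc_homog hF (fun s h1 h2 => ?_)
    have e0 := h1 0; have e1 := h1 1; have e2 := h1 2
    simp only [ee_0, ee_1, ee_2] at e0 e1 e2 ⊢
    omega
  · refine extc_homog hF (fun s h1 h2 => ?_)
    have e0 := h1 0; have e1 := h1 1; have e2 := h1 2
    simp only [ee_0, ee_1, ee_2] at e0 e1 e2 ⊢
    omega
  · refine extc_homog hF (fun s h1 h2 => ?_)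
    have e0 := h1 0; have e1 := h1 1; have e2 := h1 2
    simp only [ee_0, ee_1, ee_2] at e0 e1 e2 ⊢
    omega
  · refine extc_homog hF (fun s h1 h2 => ?_)
    have e0 := h1 0; have e1 := h1 1; have e2 := h1 2
    simp only [ee_0, ee_1, ee_2] at e0 e1 e2 ⊢
    omega
  · intro hm
    subst hm
    refine ⟨extc_guard hF ?_, extc_guard hF ?_, extc_guard hF ?_⟩ <;>
      · intro s h1
        have e0 := h1 0; have e1 := h1 1; have e2 := h1 2
        simp only [ee_0, ee_1, ee_2] at e0 e1 e2
        omega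
  · have hτf : ∀ i, (ee 0 0 0) i ≤ 1 := fun i => by
      rcases fin3_cases i with rfl | rfl | rfl <;> simp
    have hτa : ∀ i, (ee 1 1 0) i ≤ 1 := fun i => by
      rcases fin3_cases i with rfl | rfl | rfl <;> simp
    have hτb : ∀ i, (ee 1 0 1) i ≤ 1 := fun i => by
      rcases fin3_cases i with rfl | rfl | rfl <;> simp
    have hτc : ∀ i, (ee 0 1 1) i ≤ 1 := fun i => by
      rcases fin3_cases i with rfl | rfl | rfl <;> simp
    have hcov : ∀ x ∈ F.support, cls (ee 0 0 0) x ∨ cls (ee 1 1 0) x ∨ cls (ee 1 0 1) x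
        ∨ cls (ee 0 1 1) x := by
      intro x hx
      have hdeg : x 0 + x 1 + x 2 = 2 * m := by
        have := hF (MvPolynomial.mem_support_iff.mp hx)
        rwa [weight3] at this
      rcases Nat.mod_two_eq_zero_or_one (x 0) with p0 | p0 <;>
        rcases Nat.mod_two_eq_zero_or_one (x 1) with p1 | p1 <;>
        rcases Nat.mod_two_eq_zero_or_one (x 2) with p2 | p2
      all_goals first
        | exact Or.inl (cls_of _ _ (by simpa using p0) (by simpa using p1) (by simpa using p2))
        | exact Or.inr (Or.inl (cls_of _ _ (by simpa using p0) (by simpa using p1)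
            (by simpa using p2)))
        | exact Or.inr (Or.inr (Or.inl (cls_of _ _ (by simpa using p0) (by simpa using p1)
            (by simpa using p2))))
        | exact Or.inr (Or.inr (Or.inr (cls_of _ _ (by simpa using p0) (by simpa using p1)
            (by simpa using p2))))
        | (exfalso; omega)
    calc F = ∑ s ∈ F.support, monomial s (coeff s F) := (F.support_sum_monomial_coeff).symm
      _ = ∑ s ∈ F.support.filter (cls (ee 0 0 0)), monomial s (coeff s F)
          + ∑ s ∈ F.support.filter (cls (ee 1 1 0)), monomial s (coeff s F)
          + ∑ s ∈ F.support.filter (cls (ee 1 0 1)), monomial s (coeff s F)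
          + ∑ s ∈ F.support.filter (cls (ee 0 1 1)), monomial s (coeff s F) := by
          refine sum_part4 _ _ _ _ _ _ hcov ?_ ?_ ?_ ?_ ?_ ?_ <;>
            refine cls_disj (by simp)
      _ = monomial (ee 0 0 0) 1 * σ2 (extc (ee 0 0 0) F)
          + monomial (ee 1 1 0) 1 * σ2 (extc (ee 1 1 0) F)
          + monomial (ee 1 0 1) 1 * σ2 (extc (ee 1 0 1) F)
          + monomial (ee 0 1 1) 1 * σ2 (extc (ee 0 1 1) F) := by
          rw [monomial_extc hτf, monomial_extc hτa, monomial_extc hτb, monomial_extc hτc]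
      _ = σ2 (extc (ee 0 0 0) F) + X 0 * X 1 * σ2 (extc (ee 1 1 0) F)
          + X 0 * X 2 * σ2 (extc (ee 1 0 1) F) + X 1 * X 2 * σ2 (extc (ee 0 1 1) F) := by
          rw [M000, M110, M101, M011, one_mul]

lemma decompOdd {m : ℕ} {F : R3} (hF : F.IsHomogeneous (2 * m + 1)) :
    ∃ p q r h : R3, p.IsHomogeneous m ∧ q.IsHomogeneous m ∧ r.IsHomogeneous m ∧
      h.IsHomogeneous (m - 1) ∧ (m = 0 → h = 0) ∧
      F = X 0 * σ2 p + X 1 * σ2 q + X 2 * σ2 r + X 0 * X 1 * X 2 * σ2 h := by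
  classical
  refine ⟨extc (ee 1 0 0) F, extc (ee 0 1 0) F, extc (ee 0 0 1) F, extc (ee 1 1 1) F,
    ?_, ?_, ?_, ?_, ?_, ?_⟩
  · refine extc_homog hF (fun s h1 h2 => ?_)
    have e0 := h1 0; have e1 := h1 1; have e2 := h1 2
    simp only [ee_0, ee_1, ee_2] at e0 e1 e2 ⊢
    omega
  · refine extc_homog hF (fun s h1 h2 => ?_)
    have e0 := h1 0; have e1 := h1 1; have e2 := h1 2
    simp only [ee_0, ee_1, ee_2] at e0 e1 e2 ⊢
    omega
  · refine extc_homog hF (fun s h1 h2 => ?_)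
    have e0 := h1 0; have e1 := h1 1; have e2 := h1 2
    simp only [ee_0, ee_1, ee_2] at e0 e1 e2 ⊢
    omega
  · refine extc_homog hF (fun s h1 h2 => ?_)
    have e0 := h1 0; have e1 := h1 1; have e2 := h1 2
    simp only [ee_0, ee_1, ee_2] at e0 e1 e2 ⊢
    omega
  · intro hm
    subst hm
    refine extc_guard hF ?_
    intro s h1
    have e0 := h1 0; have e1 := h1 1; have e2 := h1 2
    simp only [ee_0, ee_1, ee_2] at e0 e1 e2
    omega
  · have hτp : ∀ i, (ee 1 0 0) i ≤ 1 := fun i => by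
      rcases fin3_cases i with rfl | rfl | rfl <;> simp
    have hτq : ∀ i, (ee 0 1 0) i ≤ 1 := fun i => by
      rcases fin3_cases i with rfl | rfl | rfl <;> simp
    have hτr : ∀ i, (ee 0 0 1) i ≤ 1 := fun i => by
      rcases fin3_cases i with rfl | rfl | rfl <;> simp
    have hτh : ∀ i, (ee 1 1 1) i ≤ 1 := fun i => by
      rcases fin3_cases i with rfl | rfl | rfl <;> simp
    have hcov : ∀ x ∈ F.support, cls (ee 1 0 0) x ∨ cls (ee 0 1 0) x ∨ cls (ee 0 0 1) x
        ∨ cls (ee 1 1 1) x := by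
      intro x hx
      have hdeg : x 0 + x 1 + x 2 = 2 * m + 1 := by
        have := hF (MvPolynomial.mem_support_iff.mp hx)
        rwa [weight3] at this
      rcases Nat.mod_two_eq_zero_or_one (x 0) with p0 | p0 <;>
        rcases Nat.mod_two_eq_zero_or_one (x 1) with p1 | p1 <;>
        rcases Nat.mod_two_eq_zero_or_one (x 2) with p2 | p2
      all_goals first
        | exact Or.inl (cls_of _ _ (by simpa using p0) (by simpa using p1) (by simpa using p2))
        | exact Or.inr (Or.inl (cls_of _ _ (by simpa using p0) (by simpa using p1)
            (by simpa using p2)))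
        | exact Or.inr (Or.inr (Or.inl (cls_of _ _ (by simpa using p0) (by simpa using p1)
            (by simpa using p2))))
        | exact Or.inr (Or.inr (Or.inr (cls_of _ _ (by simpa using p0) (by simpa using p1)
            (by simpa using p2))))
        | (exfalso; omega)
    calc F = ∑ s ∈ F.support, monomial s (coeff s F) := (F.support_sum_monomial_coeff).symm
      _ = ∑ s ∈ F.support.filter (cls (ee 1 0 0)), monomial s (coeff s F)
          + ∑ s ∈ F.support.filter (cls (ee 0 1 0)), monomial s (coeff s F)
          + ∑ s ∈ F.support.filter (cls (ee 0 0 1)), monomial s (coeff s F)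
          + ∑ s ∈ F.support.filter (cls (ee 1 1 1)), monomial s (coeff s F) := by
          refine sum_part4 _ _ _ _ _ _ hcov ?_ ?_ ?_ ?_ ?_ ?_ <;>
            refine cls_disj (by simp)
      _ = monomial (ee 1 0 0) 1 * σ2 (extc (ee 1 0 0) F)
          + monomial (ee 0 1 0) 1 * σ2 (extc (ee 0 1 0) F)
          + monomial (ee 0 0 1) 1 * σ2 (extc (ee 0 0 1) F)
          + monomial (ee 1 1 1) 1 * σ2 (extc (ee 1 1 1) F) := by
          rw [monomial_extc hτp, monomial_extc hτq, monomial_extc hτr, monomial_extc hτh]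
      _ = X 0 * σ2 (extc (ee 1 0 0) F) + X 1 * σ2 (extc (ee 0 1 0) F)
          + X 2 * σ2 (extc (ee 0 0 1) F) + X 0 * X 1 * X 2 * σ2 (extc (ee 1 1 1) F) := by
          rw [M100, M010, M001, M111]


lemma σ2X (i : Fin 3) : σ2 (X i : R3) = X i ^ 2 := by
  rw [σ2]; exact expand_X 2 i

lemma DD_ne : (X 0^2 + X 1^2 + X 2^2 - 2*(X 0*X 1) - 2*(X 0*X 2) - 2*(X 1*X 2) : R3) ≠ 0 := by
  intro h
  have := congrArg (eval (![1, 0, 0] : Fin 3 → ℂ)) h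
  simp at this

lemma ee_le1 {a b c : ℕ} (ha : a ≤ 1) (hb : b ≤ 1) (hc : c ≤ 1) :
    ∀ i, ee a b c i ≤ 1 := fun i => by
  rcases fin3_cases i with rfl | rfl | rfl <;> simpa

lemma ee_ne {a b c a' b' c' : ℕ} (h : ¬(a = a' ∧ b = b' ∧ c = c')) :
    ee a b c ≠ ee a' b' c' := by
  intro he
  have h0 := DFunLike.congr_fun he 0
  have h1 := DFunLike.congr_fun he 1
  have h2 := DFunLike.congr_fun he 2
  simp only [ee_0, ee_1, ee_2] at h0 h1 h2
  tauto

lemma mulX_homog {m : ℕ} {g : R3} (hg : g.IsHomogeneous (m - 1)) (hg0 : m = 0 → g = 0)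
    (j : Fin 3) : (X j * g).IsHomogeneous m := by
  rcases Nat.eq_zero_or_pos m with rfl | hmp
  · rw [hg0 rfl, mul_zero]
    exact isHomogeneous_zero _ _ _
  · have h := (isHomogeneous_X ℂ j).mul hg
    have heq : 1 + (m - 1) = m := by omega
    rwa [heq] at h

lemma injEven {k m : ℕ} (hm : m < k) {F : R3} (hF : F.IsHomogeneous (2 * m))
    (hmem : (X 0 + X 1 + X 2) * F ∈ KI k) : F = 0 := by
  obtain ⟨f, a, b, c, hf, ha, hb, hc, hg, hFeq⟩ := decompEven hF
  have hid : (X 0 + X 1 + X 2) * F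
      = monomial (ee 1 0 0) 1 * σ2 (f + X 1 * a + X 2 * b)
      + monomial (ee 0 1 0) 1 * σ2 (f + X 0 * a + X 2 * c)
      + monomial (ee 0 0 1) 1 * σ2 (f + X 0 * b + X 1 * c)
      + monomial (ee 1 1 1) 1 * σ2 (a + b + c) := by
    rw [hFeq, M100, M010, M001, M111]
    simp only [map_add, map_mul, σ2X]
    ring
  rw [hid] at hmem
  have hga : m = 0 → a = 0 := fun h => (hg h).1
  have hgb : m = 0 → b = 0 := fun h => (hg h).2.1
  have hgc : m = 0 → c = 0 := fun h => (hg h).2.2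
  have hEf1 : (f + X 1 * a + X 2 * b).IsHomogeneous m :=
    (hf.add (mulX_homog ha hga 1)).add (mulX_homog hb hgb 2)
  have hEf2 : (f + X 0 * a + X 2 * c).IsHomogeneous m :=
    (hf.add (mulX_homog ha hga 0)).add (mulX_homog hc hgc 2)
  have hEf3 : (f + X 0 * b + X 1 * c).IsHomogeneous m :=
    (hf.add (mulX_homog hb hgb 0)).add (mulX_homog hc hgc 1)
  have hEf4 : (a + b + c).IsHomogeneous (m - 1) := (ha.add hb).add hc
  have e1 : f + X 1 * a + X 2 * b = 0 :=
    vanish4 (ee_le1 le_rfl zero_le_one zero_le_one) (ee_le1 zero_le_one le_rfl zero_le_one)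
      (ee_le1 zero_le_one zero_le_one le_rfl) (ee_le1 le_rfl le_rfl le_rfl)
      (ee_ne (by simp)) (ee_ne (by simp)) (ee_ne (by simp)) hEf1 hm hmem
  have e2 : f + X 0 * a + X 2 * c = 0 := by
    have hmem' : monomial (ee 0 1 0) 1 * σ2 (f + X 0 * a + X 2 * c)
        + monomial (ee 1 0 0) 1 * σ2 (f + X 1 * a + X 2 * b)
        + monomial (ee 0 0 1) 1 * σ2 (f + X 0 * b + X 1 * c)
        + monomial (ee 1 1 1) 1 * σ2 (a + b + c) ∈ KI k := by
      rw [show monomial (ee 0 1 0) 1 * σ2 (f + X 0 * a + X 2 * c) + monomial (ee 1 0 0) 1 * σ2 (f + X 1 * a + X 2 * b) + monomial (ee 0 0 1) 1 * σ2 (f + X 0 * b + X 1 * c) + monomial (ee 1 1 1) 1 * σ2 (a + b + c)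
          = monomial (ee 1 0 0) 1 * σ2 (f + X 1 * a + X 2 * b) + monomial (ee 0 1 0) 1 * σ2 (f + X 0 * a + X 2 * c) + monomial (ee 0 0 1) 1 * σ2 (f + X 0 * b + X 1 * c) + monomial (ee 1 1 1) 1 * σ2 (a + b + c) from by ring]
      exact hmem
    exact vanish4 (ee_le1 zero_le_one le_rfl zero_le_one) (ee_le1 le_rfl zero_le_one zero_le_one)
      (ee_le1 zero_le_one zero_le_one le_rfl) (ee_le1 le_rfl le_rfl le_rfl)
      (ee_ne (by simp)) (ee_ne (by simp)) (ee_ne (by simp)) hEf2 hm hmem'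
  have e3 : f + X 0 * b + X 1 * c = 0 := by
    have hmem' : monomial (ee 0 0 1) 1 * σ2 (f + X 0 * b + X 1 * c)
        + monomial (ee 1 0 0) 1 * σ2 (f + X 1 * a + X 2 * b)
        + monomial (ee 0 1 0) 1 * σ2 (f + X 0 * a + X 2 * c)
        + monomial (ee 1 1 1) 1 * σ2 (a + b + c) ∈ KI k := by
      rw [show monomial (ee 0 0 1) 1 * σ2 (f + X 0 * b + X 1 * c) + monomial (ee 1 0 0) 1 * σ2 (f + X 1 * a + X 2 * b) + monomial (ee 0 1 0) 1 * σ2 (f + X 0 * a + X 2 * c) + monomial (ee 1 1 1) 1 * σ2 (a + b + c)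
          = monomial (ee 1 0 0) 1 * σ2 (f + X 1 * a + X 2 * b) + monomial (ee 0 1 0) 1 * σ2 (f + X 0 * a + X 2 * c) + monomial (ee 0 0 1) 1 * σ2 (f + X 0 * b + X 1 * c) + monomial (ee 1 1 1) 1 * σ2 (a + b + c) from by ring]
      exact hmem
    exact vanish4 (ee_le1 zero_le_one zero_le_one le_rfl) (ee_le1 le_rfl zero_le_one zero_le_one)
      (ee_le1 zero_le_one le_rfl zero_le_one) (ee_le1 le_rfl le_rfl le_rfl)
      (ee_ne (by simp)) (ee_ne (by simp)) (ee_ne (by simp)) hEf3 hm hmem'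
  have e4 : a + b + c = 0 := by
    have hmem' : monomial (ee 1 1 1) 1 * σ2 (a + b + c)
        + monomial (ee 1 0 0) 1 * σ2 (f + X 1 * a + X 2 * b)
        + monomial (ee 0 1 0) 1 * σ2 (f + X 0 * a + X 2 * c)
        + monomial (ee 0 0 1) 1 * σ2 (f + X 0 * b + X 1 * c) ∈ KI k := by
      rw [show monomial (ee 1 1 1) 1 * σ2 (a + b + c) + monomial (ee 1 0 0) 1 * σ2 (f + X 1 * a + X 2 * b) + monomial (ee 0 1 0) 1 * σ2 (f + X 0 * a + X 2 * c) + monomial (ee 0 0 1) 1 * σ2 (f + X 0 * b + X 1 * c)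
          = monomial (ee 1 0 0) 1 * σ2 (f + X 1 * a + X 2 * b) + monomial (ee 0 1 0) 1 * σ2 (f + X 0 * a + X 2 * c) + monomial (ee 0 0 1) 1 * σ2 (f + X 0 * b + X 1 * c) + monomial (ee 1 1 1) 1 * σ2 (a + b + c) from by ring]
      exact hmem
    exact vanish4 (ee_le1 le_rfl le_rfl le_rfl) (ee_le1 le_rfl zero_le_one zero_le_one)
      (ee_le1 zero_le_one le_rfl zero_le_one) (ee_le1 zero_le_one zero_le_one le_rfl)
      (ee_ne (by simp)) (ee_ne (by simp)) (ee_ne (by simp)) hEf4 (by omega) hmem'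
  have hDa : (X 0^2 + X 1^2 + X 2^2 - 2*(X 0*X 1) - 2*(X 0*X 2) - 2*(X 1*X 2) : R3) * a = 0 := by
    linear_combination (-(X 2 + X 0 - X 1)) * e1 + (-(X 2 - X 0 + X 1)) * e2 + (2*X 2) * e3
      + (-(X 2 * (X 0 + X 1 - X 2))) * e4
  have ha0 : a = 0 := by
    rcases mul_eq_zero.mp hDa with h | h
    · exact absurd h DD_ne
    · exact h
  have hDb : (X 0^2 + X 1^2 + X 2^2 - 2*(X 0*X 1) - 2*(X 0*X 2) - 2*(X 1*X 2) : R3) * b = 0 := by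
    linear_combination (-(X 1 + X 0 - X 2)) * e1 + (2*X 1) * e2 + (-(X 1 - X 0 + X 2)) * e3
      + (-(X 1 * (X 0 + X 2 - X 1))) * e4
  have hb0 : b = 0 := by
    rcases mul_eq_zero.mp hDb with h | h
    · exact absurd h DD_ne
    · exact h
  have hc0 : c = 0 := by linear_combination e4 - ha0 - hb0
  have hf0 : f = 0 := by linear_combination e1 - X 1 * ha0 - X 2 * hb0
  rw [hFeq, hf0, ha0, hb0, hc0]
  simp

lemma injOdd {k m : ℕ} (hm : m + 2 ≤ k) {F : R3} (hF : F.IsHomogeneous (2 * m + 1))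
    (hmem : (X 0 + X 1 + X 2) * F ∈ KI k) : F = 0 := by
  obtain ⟨p, q, r, h, hp, hq, hr, hh, hgh, hFeq⟩ := decompOdd hF
  have hid : (X 0 + X 1 + X 2) * F
      = monomial (ee 0 0 0) 1 * σ2 (X 0 * p + X 1 * q + X 2 * r)
      + monomial (ee 1 1 0) 1 * σ2 (p + q + X 2 * h)
      + monomial (ee 1 0 1) 1 * σ2 (p + r + X 1 * h)
      + monomial (ee 0 1 1) 1 * σ2 (q + r + X 0 * h) := by
    rw [hFeq, M000, M110, M101, M011]
    simp only [map_add, map_mul, σ2X]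
    ring
  rw [hid] at hmem
  have hE0 : (X 0 * p + X 1 * q + X 2 * r).IsHomogeneous (m + 1) := by
    have h0 := (isHomogeneous_X ℂ (0 : Fin 3)).mul hp
    have h1 := (isHomogeneous_X ℂ (1 : Fin 3)).mul hq
    have h2 := (isHomogeneous_X ℂ (2 : Fin 3)).mul hr
    rw [show 1 + m = m + 1 from by omega] at h0 h1 h2
    exact (h0.add h1).add h2
  have hE1 : (p + q + X 2 * h).IsHomogeneous m := (hp.add hq).add (mulX_homog hh hgh 2)
  have hE2 : (p + r + X 1 * h).IsHomogeneous m := (hp.add hr).add (mulX_homog hh hgh 1)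
  have hE3 : (q + r + X 0 * h).IsHomogeneous m := (hq.add hr).add (mulX_homog hh hgh 0)
  have e0 : X 0 * p + X 1 * q + X 2 * r = 0 :=
    vanish4 (ee_le1 zero_le_one zero_le_one zero_le_one) (ee_le1 le_rfl le_rfl zero_le_one)
      (ee_le1 le_rfl zero_le_one le_rfl) (ee_le1 zero_le_one le_rfl le_rfl)
      (ee_ne (by simp)) (ee_ne (by simp)) (ee_ne (by simp)) hE0 (by omega) hmem
  have e110 : p + q + X 2 * h = 0 := by
    have hmem' : monomial (ee 1 1 0) 1 * σ2 (p + q + X 2 * h)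
        + monomial (ee 0 0 0) 1 * σ2 (X 0 * p + X 1 * q + X 2 * r)
        + monomial (ee 1 0 1) 1 * σ2 (p + r + X 1 * h)
        + monomial (ee 0 1 1) 1 * σ2 (q + r + X 0 * h) ∈ KI k := by
      rw [show monomial (ee 1 1 0) 1 * σ2 (p + q + X 2 * h) + monomial (ee 0 0 0) 1 * σ2 (X 0 * p + X 1 * q + X 2 * r) + monomial (ee 1 0 1) 1 * σ2 (p + r + X 1 * h) + monomial (ee 0 1 1) 1 * σ2 (q + r + X 0 * h)
          = monomial (ee 0 0 0) 1 * σ2 (X 0 * p + X 1 * q + X 2 * r) + monomial (ee 1 1 0) 1 * σ2 (p + q + X 2 * h) + monomial (ee 1 0 1) 1 * σ2 (p + r + X 1 * h) + monomial (ee 0 1 1) 1 * σ2 (q + r + X 0 * h) from by ring]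
      exact hmem
    exact vanish4 (ee_le1 le_rfl le_rfl zero_le_one) (ee_le1 zero_le_one zero_le_one zero_le_one)
      (ee_le1 le_rfl zero_le_one le_rfl) (ee_le1 zero_le_one le_rfl le_rfl)
      (ee_ne (by simp)) (ee_ne (by simp)) (ee_ne (by simp)) hE1 (by omega) hmem'
  have e101 : p + r + X 1 * h = 0 := by
    have hmem' : monomial (ee 1 0 1) 1 * σ2 (p + r + X 1 * h)
        + monomial (ee 0 0 0) 1 * σ2 (X 0 * p + X 1 * q + X 2 * r)
        + monomial (ee 1 1 0) 1 * σ2 (p + q + X 2 * h)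
        + monomial (ee 0 1 1) 1 * σ2 (q + r + X 0 * h) ∈ KI k := by
      rw [show monomial (ee 1 0 1) 1 * σ2 (p + r + X 1 * h) + monomial (ee 0 0 0) 1 * σ2 (X 0 * p + X 1 * q + X 2 * r) + monomial (ee 1 1 0) 1 * σ2 (p + q + X 2 * h) + monomial (ee 0 1 1) 1 * σ2 (q + r + X 0 * h)
          = monomial (ee 0 0 0) 1 * σ2 (X 0 * p + X 1 * q + X 2 * r) + monomial (ee 1 1 0) 1 * σ2 (p + q + X 2 * h) + monomial (ee 1 0 1) 1 * σ2 (p + r + X 1 * h) + monomial (ee 0 1 1) 1 * σ2 (q + r + X 0 * h) from by ring]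
      exact hmem
    exact vanish4 (ee_le1 le_rfl zero_le_one le_rfl) (ee_le1 zero_le_one zero_le_one zero_le_one)
      (ee_le1 le_rfl le_rfl zero_le_one) (ee_le1 zero_le_one le_rfl le_rfl)
      (ee_ne (by simp)) (ee_ne (by simp)) (ee_ne (by simp)) hE2 (by omega) hmem'
  have e011 : q + r + X 0 * h = 0 := by
    have hmem' : monomial (ee 0 1 1) 1 * σ2 (q + r + X 0 * h)
        + monomial (ee 0 0 0) 1 * σ2 (X 0 * p + X 1 * q + X 2 * r)
        + monomial (ee 1 1 0) 1 * σ2 (p + q + X 2 * h)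
        + monomial (ee 1 0 1) 1 * σ2 (p + r + X 1 * h) ∈ KI k := by
      rw [show monomial (ee 0 1 1) 1 * σ2 (q + r + X 0 * h) + monomial (ee 0 0 0) 1 * σ2 (X 0 * p + X 1 * q + X 2 * r) + monomial (ee 1 1 0) 1 * σ2 (p + q + X 2 * h) + monomial (ee 1 0 1) 1 * σ2 (p + r + X 1 * h)
          = monomial (ee 0 0 0) 1 * σ2 (X 0 * p + X 1 * q + X 2 * r) + monomial (ee 1 1 0) 1 * σ2 (p + q + X 2 * h) + monomial (ee 1 0 1) 1 * σ2 (p + r + X 1 * h) + monomial (ee 0 1 1) 1 * σ2 (q + r + X 0 * h) from by ring]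
      exact hmem
    exact vanish4 (ee_le1 zero_le_one le_rfl le_rfl) (ee_le1 zero_le_one zero_le_one zero_le_one)
      (ee_le1 le_rfl le_rfl zero_le_one) (ee_le1 le_rfl zero_le_one le_rfl)
      (ee_ne (by simp)) (ee_ne (by simp)) (ee_ne (by simp)) hE3 (by omega) hmem'
  have hDh : (X 0^2 + X 1^2 + X 2^2 - 2*(X 0*X 1) - 2*(X 0*X 2) - 2*(X 1*X 2) : R3) * h = 0 := by
    linear_combination 2 * e0 + (-(X 0) - X 1 + X 2) * e110 + (-(X 0) + X 1 - X 2) * e101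
      + (X 0 - X 1 - X 2) * e011
  have hh0 : h = 0 := by
    rcases mul_eq_zero.mp hDh with hx | hx
    · exact absurd hx DD_ne
    · exact hx
  have h2 : (2 : R3) ≠ 0 := two_ne_zero
  have hp0 : p = 0 := by
    have h2p : (2 : R3) * p = 0 := by
      linear_combination e110 + e101 - e011 - (X 2 + X 1 - X 0) * hh0
    rcases mul_eq_zero.mp h2p with hx | hx
    · exact absurd hx h2
    · exact hx
  have hq0 : q = 0 := by
    have h2q : (2 : R3) * q = 0 := by
      linear_combination e110 - e101 + e011 - (X 2 - X 1 + X 0) * hh0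
    rcases mul_eq_zero.mp h2q with hx | hx
    · exact absurd hx h2
    · exact hx
  have hr0 : r = 0 := by
    have h2r : (2 : R3) * r = 0 := by
      linear_combination - e110 + e101 + e011 - (- X 2 + X 1 + X 0) * hh0
    rcases mul_eq_zero.mp h2r with hx | hx
    · exact absurd hx h2
    · exact hx
  rw [hFeq, hp0, hq0, hr0, hh0]
  simp


lemma surjMono {k : ℕ} (t : Fin 3 →₀ ℕ) (hdeg : 2 * k ≤ t 0 + t 1 + t 2) :
    ∃ F : R3, F.IsHomogeneous (t 0 + t 1 + t 2 - 1) ∧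
      (X 0 + X 1 + X 2) * F - monomial t 1
        ∈ (Ideal.span (Set.range fun i : Fin 3 => (X i : R3) ^ 2)) ^ k := by
  by_cases hbig : k ≤ t 0 / 2 + t 1 / 2 + t 2 / 2
  · refine ⟨0, isHomogeneous_zero _ _ _, ?_⟩
    rw [mul_zero, zero_sub]
    exact neg_mem (mono_mem hbig 1)
  · push_neg at hbig
    have hodd : (t 0 % 2 = 1 ∧ t 1 % 2 = 1) ∨ (t 0 % 2 = 1 ∧ t 2 % 2 = 1)
        ∨ (t 1 % 2 = 1 ∧ t 2 % 2 = 1) := by omega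
    have hXsub : ∀ i j l : Fin 3, (X i + X j - X l : R3).IsHomogeneous 1 := fun i j l =>
      ((isHomogeneous_X ℂ i).add (isHomogeneous_X ℂ j)).sub (isHomogeneous_X ℂ l)
    rcases hodd with ⟨ho1, ho2⟩ | ⟨ho1, ho2⟩ | ⟨ho1, ho2⟩
    · refine ⟨C (1/2 : ℂ) * (monomial (t - ee 1 1 0) 1 * (X 0 + X 1 - X 2)), ?_, ?_⟩
      · have hdegN : (t - ee 1 1 0).degree = t 0 + t 1 + t 2 - 2 := by
          rw [deg3]
          simp only [Finsupp.tsub_apply, ee_0, ee_1, ee_2]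
          omega
        have h := ((isHomogeneous_monomial (1:ℂ) hdegN).mul (hXsub 0 1 2)).C_mul (1/2 : ℂ)
        rwa [show t 0 + t 1 + t 2 - 2 + 1 = t 0 + t 1 + t 2 - 1 from by omega] at h
      · have hNij : monomial (t - ee 1 1 0) (1:ℂ) * (X 0 * X 1) = monomial t 1 := by
          rw [← M110, monomial_mul, mul_one,
            show t - ee 1 1 0 + ee 1 1 0 = t from by
              ext m; rcases fin3_cases m with rfl | rfl | rfl <;>
                simp only [Finsupp.add_apply, Finsupp.tsub_apply, ee_0, ee_1, ee_2] <;> omega]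
        have key : (X 0 + X 1 + X 2) * (C (1/2:ℂ) * (monomial (t - ee 1 1 0) 1 * (X 0 + X 1 - X 2)))
            - monomial t 1
            = C (1/2:ℂ) * (monomial (t - ee 1 1 0) 1 * X 0 ^ 2)
            + C (1/2:ℂ) * (monomial (t - ee 1 1 0) 1 * X 1 ^ 2)
            - C (1/2:ℂ) * (monomial (t - ee 1 1 0) 1 * X 2 ^ 2) := by
          have hC : C (1/2:ℂ) + C (1/2:ℂ) = (1 : R3) := by
            rw [← C_add]
            norm_num
          rw [← hNij]
          linear_combination (X 0 * X 1 * (monomial (t - ee 1 1 0) (1:ℂ))) * hC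
        rw [key]
        have mg : ∀ (j : Fin 3) (e : Fin 3 →₀ ℕ),
            (t - ee 1 1 0) + Finsupp.single j 2 = e →
            k ≤ e 0 / 2 + e 1 / 2 + e 2 / 2 →
            monomial (t - ee 1 1 0) (1:ℂ) * X j ^ 2
              ∈ (Ideal.span (Set.range fun i : Fin 3 => (X i : R3) ^ 2)) ^ k := by
          intro j e he hk
          rw [X_pow_eq_monomial, monomial_mul, mul_one, he]
          exact mono_mem hk 1
        refine sub_mem (add_mem ?_ ?_) ?_
        · refine Ideal.mul_mem_left _ _ (mg 0 (t - ee 1 1 0 + Finsupp.single 0 2) rfl ?_)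
          simp only [Finsupp.add_apply, Finsupp.tsub_apply, Finsupp.single_apply, ee_0, ee_1, ee_2]
          norm_num
          omega
        · refine Ideal.mul_mem_left _ _ (mg 1 (t - ee 1 1 0 + Finsupp.single 1 2) rfl ?_)
          simp only [Finsupp.add_apply, Finsupp.tsub_apply, Finsupp.single_apply, ee_0, ee_1, ee_2]
          norm_num
          omega
        · refine Ideal.mul_mem_left _ _ (mg 2 (t - ee 1 1 0 + Finsupp.single 2 2) rfl ?_)
          simp only [Finsupp.add_apply, Finsupp.tsub_apply, Finsupp.single_apply, ee_0, ee_1, ee_2]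
          norm_num
          omega
    · refine ⟨C (1/2 : ℂ) * (monomial (t - ee 1 0 1) 1 * (X 0 + X 2 - X 1)), ?_, ?_⟩
      · have hdegN : (t - ee 1 0 1).degree = t 0 + t 1 + t 2 - 2 := by
          rw [deg3]
          simp only [Finsupp.tsub_apply, ee_0, ee_1, ee_2]
          omega
        have h := ((isHomogeneous_monomial (1:ℂ) hdegN).mul (hXsub 0 2 1)).C_mul (1/2 : ℂ)
        rwa [show t 0 + t 1 + t 2 - 2 + 1 = t 0 + t 1 + t 2 - 1 from by omega] at h
      · have hNij : monomial (t - ee 1 0 1) (1:ℂ) * (X 0 * X 2) = monomial t 1 := by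
          rw [← M101, monomial_mul, mul_one,
            show t - ee 1 0 1 + ee 1 0 1 = t from by
              ext m; rcases fin3_cases m with rfl | rfl | rfl <;>
                simp only [Finsupp.add_apply, Finsupp.tsub_apply, ee_0, ee_1, ee_2] <;> omega]
        have key : (X 0 + X 1 + X 2) * (C (1/2:ℂ) * (monomial (t - ee 1 0 1) 1 * (X 0 + X 2 - X 1)))
            - monomial t 1
            = C (1/2:ℂ) * (monomial (t - ee 1 0 1) 1 * X 0 ^ 2)
            + C (1/2:ℂ) * (monomial (t - ee 1 0 1) 1 * X 2 ^ 2)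
            - C (1/2:ℂ) * (monomial (t - ee 1 0 1) 1 * X 1 ^ 2) := by
          have hC : C (1/2:ℂ) + C (1/2:ℂ) = (1 : R3) := by
            rw [← C_add]
            norm_num
          rw [← hNij]
          linear_combination (X 0 * X 2 * (monomial (t - ee 1 0 1) (1:ℂ))) * hC
        rw [key]
        have mg : ∀ (j : Fin 3) (e : Fin 3 →₀ ℕ),
            (t - ee 1 0 1) + Finsupp.single j 2 = e →
            k ≤ e 0 / 2 + e 1 / 2 + e 2 / 2 →
            monomial (t - ee 1 0 1) (1:ℂ) * X j ^ 2
              ∈ (Ideal.span (Set.range fun i : Fin 3 => (X i : R3) ^ 2)) ^ k := by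
          intro j e he hk
          rw [X_pow_eq_monomial, monomial_mul, mul_one, he]
          exact mono_mem hk 1
        refine sub_mem (add_mem ?_ ?_) ?_
        · refine Ideal.mul_mem_left _ _ (mg 0 (t - ee 1 0 1 + Finsupp.single 0 2) rfl ?_)
          simp only [Finsupp.add_apply, Finsupp.tsub_apply, Finsupp.single_apply, ee_0, ee_1, ee_2]
          norm_num
          omega
        · refine Ideal.mul_mem_left _ _ (mg 2 (t - ee 1 0 1 + Finsupp.single 2 2) rfl ?_)
          simp only [Finsupp.add_apply, Finsupp.tsub_apply, Finsupp.single_apply, ee_0, ee_1, ee_2]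
          norm_num
          omega
        · refine Ideal.mul_mem_left _ _ (mg 1 (t - ee 1 0 1 + Finsupp.single 1 2) rfl ?_)
          simp only [Finsupp.add_apply, Finsupp.tsub_apply, Finsupp.single_apply, ee_0, ee_1, ee_2]
          norm_num
          omega
    · refine ⟨C (1/2 : ℂ) * (monomial (t - ee 0 1 1) 1 * (X 1 + X 2 - X 0)), ?_, ?_⟩
      · have hdegN : (t - ee 0 1 1).degree = t 0 + t 1 + t 2 - 2 := by
          rw [deg3]
          simp only [Finsupp.tsub_apply, ee_0, ee_1, ee_2]
          omega
        have h := ((isHomogeneous_monomial (1:ℂ) hdegN).mul (hXsub 1 2 0)).C_mul (1/2 : ℂ)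
        rwa [show t 0 + t 1 + t 2 - 2 + 1 = t 0 + t 1 + t 2 - 1 from by omega] at h
      · have hNij : monomial (t - ee 0 1 1) (1:ℂ) * (X 1 * X 2) = monomial t 1 := by
          rw [← M011, monomial_mul, mul_one,
            show t - ee 0 1 1 + ee 0 1 1 = t from by
              ext m; rcases fin3_cases m with rfl | rfl | rfl <;>
                simp only [Finsupp.add_apply, Finsupp.tsub_apply, ee_0, ee_1, ee_2] <;> omega]
        have key : (X 0 + X 1 + X 2) * (C (1/2:ℂ) * (monomial (t - ee 0 1 1) 1 * (X 1 + X 2 - X 0)))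
            - monomial t 1
            = C (1/2:ℂ) * (monomial (t - ee 0 1 1) 1 * X 1 ^ 2)
            + C (1/2:ℂ) * (monomial (t - ee 0 1 1) 1 * X 2 ^ 2)
            - C (1/2:ℂ) * (monomial (t - ee 0 1 1) 1 * X 0 ^ 2) := by
          have hC : C (1/2:ℂ) + C (1/2:ℂ) = (1 : R3) := by
            rw [← C_add]
            norm_num
          rw [← hNij]
          linear_combination (X 1 * X 2 * (monomial (t - ee 0 1 1) (1:ℂ))) * hC
        rw [key]
        have mg : ∀ (j : Fin 3) (e : Fin 3 →₀ ℕ),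
            (t - ee 0 1 1) + Finsupp.single j 2 = e →
            k ≤ e 0 / 2 + e 1 / 2 + e 2 / 2 →
            monomial (t - ee 0 1 1) (1:ℂ) * X j ^ 2
              ∈ (Ideal.span (Set.range fun i : Fin 3 => (X i : R3) ^ 2)) ^ k := by
          intro j e he hk
          rw [X_pow_eq_monomial, monomial_mul, mul_one, he]
          exact mono_mem hk 1
        refine sub_mem (add_mem ?_ ?_) ?_
        · refine Ideal.mul_mem_left _ _ (mg 1 (t - ee 0 1 1 + Finsupp.single 1 2) rfl ?_)
          simp only [Finsupp.add_apply, Finsupp.tsub_apply, Finsupp.single_apply, ee_0, ee_1, ee_2]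
          norm_num
          omega
        · refine Ideal.mul_mem_left _ _ (mg 2 (t - ee 0 1 1 + Finsupp.single 2 2) rfl ?_)
          simp only [Finsupp.add_apply, Finsupp.tsub_apply, Finsupp.single_apply, ee_0, ee_1, ee_2]
          norm_num
          omega
        · refine Ideal.mul_mem_left _ _ (mg 0 (t - ee 0 1 1 + Finsupp.single 0 2) rfl ?_)
          simp only [Finsupp.add_apply, Finsupp.tsub_apply, Finsupp.single_apply, ee_0, ee_1, ee_2]
          norm_num
          omega

end WLP8


theorem stmt_8 (k : ℕ) (hk : 1 ≤ k) : hasWLP (Tideal 3 2 k) := by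
  classical
  refine ⟨X 0 + X 1 + X 2,
    ((isHomogeneous_X ℂ 0).add (isHomogeneous_X ℂ 1)).add (isHomogeneous_X ℂ 2), fun i => ?_⟩
  have hJdef : Tideal 3 2 k
      = (Ideal.span (Set.range fun i : Fin 3 => (X i : WLP8.R3) ^ 2)) ^ k := rfl
  rcases lt_or_ge i (2 * k - 1) with hlt | hge
  · left
    rintro x ⟨F, hF, rfl⟩ hLx
    have hFh : F.IsHomogeneous i := (mem_homogeneousSubmodule _ _).mp hF
    have hmul : Ideal.Quotient.mk (Tideal 3 2 k) ((X 0 + X 1 + X 2) * F) = 0 := by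
      rw [map_mul]
      simpa [Ideal.Quotient.mkₐ_eq_mk] using hLx
    have hmem : (X 0 + X 1 + X 2) * F ∈ Tideal 3 2 k :=
      (Ideal.Quotient.eq_zero_iff_mem).mp hmul
    have hmemK : (X 0 + X 1 + X 2) * F ∈ WLP8.KI k := by
      rw [hJdef] at hmem
      exact WLP8.Tideal_le_KI k hmem
    have hF0 : F = 0 := by
      rcases Nat.even_or_odd i with ⟨m, hm⟩ | ⟨m, hm⟩
      · exact WLP8.injEven (k := k) (m := m) (by omega)
          (by rwa [show 2 * m = i from by omega]) hmemK
      · exact WLP8.injOdd (k := k) (m := m) (by omega)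
          (by rwa [show 2 * m + 1 = i from by omega]) hmemK
    simp [hF0]
  · right
    rintro y ⟨P, hP, rfl⟩
    have hPh : P.IsHomogeneous (i + 1) := (mem_homogeneousSubmodule _ _).mp hP
    have hex : ∀ s : Fin 3 →₀ ℕ, ∃ Fs : MvPolynomial (Fin 3) ℂ, Fs.IsHomogeneous i ∧
        (s ∈ P.support → (X 0 + X 1 + X 2) * Fs - monomial s 1 ∈ Tideal 3 2 k) := by
      intro s
      by_cases hs : s ∈ P.support
      · have hdeg : s 0 + s 1 + s 2 = i + 1 := by
          have := hPh (MvPolynomial.mem_support_iff.mp hs)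
          rwa [WLP8.weight3] at this
        obtain ⟨Fs, h1, h2⟩ := WLP8.surjMono (k := k) s (by omega)
        refine ⟨Fs, by rwa [show s 0 + s 1 + s 2 - 1 = i from by omega] at h1, fun _ => ?_⟩
        rw [hJdef]
        exact h2
      · exact ⟨0, isHomogeneous_zero _ _ _, fun h => absurd h hs⟩
    choose g hg1 hg2 using hex
    refine ⟨(Ideal.Quotient.mkₐ ℂ (Tideal 3 2 k)).toLinearMap (∑ s ∈ P.support, coeff s P • g s),
      ⟨∑ s ∈ P.support, coeff s P • g s, ?_, rfl⟩, ?_⟩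
    · exact Submodule.sum_mem _ fun s hs =>
        Submodule.smul_mem _ _ ((mem_homogeneousSubmodule _ _).mpr (hg1 s))
    · have hdiff : (X 0 + X 1 + X 2) * (∑ s ∈ P.support, coeff s P • g s) - P ∈ Tideal 3 2 k := by
        have hPsum : P = ∑ s ∈ P.support, coeff s P • monomial s (1 : ℂ) := by
          conv_lhs => rw [← P.support_sum_monomial_coeff]
          refine Finset.sum_congr rfl fun s _ => ?_
          simp [smul_monomial]
        have heq : (X 0 + X 1 + X 2) * (∑ s ∈ P.support, coeff s P • g s) - P
            = ∑ s ∈ P.support, coeff s P • ((X 0 + X 1 + X 2) * g s - monomial s 1) := by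
          have h1 : ∑ s ∈ P.support, coeff s P • ((X 0 + X 1 + X 2) * g s - monomial s 1)
              = (X 0 + X 1 + X 2) * (∑ s ∈ P.support, coeff s P • g s)
                - ∑ s ∈ P.support, coeff s P • monomial s (1 : ℂ) := by
            rw [Finset.mul_sum, ← Finset.sum_sub_distrib]
            exact Finset.sum_congr rfl fun s _ => by rw [smul_sub, mul_smul_comm]
          rw [h1, ← hPsum]
        rw [heq]
        refine Submodule.sum_mem _ fun s hs => ?_
        rw [smul_eq_C_mul]
        exact Ideal.mul_mem_left _ _ (hg2 s hs)
      simp only [Ideal.Quotient.mkₐ_eq_mk, AlgHom.toLinearMap_apply]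
      rw [← map_mul]
      exact (Ideal.Quotient.mk_eq_mk_iff_sub_mem _ _).mpr hdiff
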